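/- Let a₀>0, M≥a₀, and 0<δ≤l. There exists a constant C₁>0 depending only on a₀, M, δ, l such that the following holds. Let τ>0, m≥1, h₀,…,h_{m-1}>0 with δ ≤ ∑_{i<m}h_i ≤ l, reals a_i∈[a₀,M], |b_i|≤M, |c_i|≤M, f_i∈ℝ (i=0,…,m−1), P,G∈ℝ, and w∈ℝ^{m+1}. If u∈ℝ^{m+1} satisfies, for every η∈ℝ^{m+1}, ∑_{i=0}^{m-1} h_i·[a_i·u_{ix}·η_{ix} − b_i·u_{ix}·η_i − c_i·u_i·η_i + f_i·η_i + ((u_i−w_i)/τ)·η_i] + P·η_m + G·η₀ = 0 (with u_{ix}=(u_{i+1}−u_i)/h_i, η_{ix}=(η_{i+1}−η_i)/h_i), then ∑_{i<m}h_i·u_i² − ∑_{i<m}h_i·w_i² + a₀·τ·∑_{i<m}h_i·u_{ix}² + τ²·∑_{i<m}h_i·((u_i−w_i)/τ)² ≤ C₁·τ·[P² + G² + ∑_{i<m}h_i·f_i² + ∑_{i<m}h_i·u_i²]. -/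

import Mathlib

open Finset

/-- Discrete Morrey inequality. -/
lemma morrey_aux (δ l : ℝ) (hδ : 0 < δ) (m : ℕ) (hm : 1 ≤ m) (h u : ℕ → ℝ)
    (hh : ∀ i < m, 0 < h i) (hδs : δ ≤ ∑ i ∈ range m, h i)
    (hsl : ∑ i ∈ range m, h i ≤ l) (j : ℕ) (hj : j ≤ m) :
    (u j)^2 ≤ (2/δ) * ∑ i ∈ range m, h i * (u i)^2
      + 2*l*∑ i ∈ range m, h i * ((u (i+1) - u i)/h i)^2 := by
  set S := ∑ i ∈ range m, h i * (u i)^2 with hS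
  set Sx := ∑ i ∈ range m, h i * ((u (i+1) - u i)/h i)^2 with hSx
  have hS0 : 0 ≤ S := sum_nonneg fun i hi =>
    mul_nonneg (hh i (mem_range.1 hi)).le (sq_nonneg _)
  have hSx0 : 0 ≤ Sx := sum_nonneg fun i hi =>
    mul_nonneg (hh i (mem_range.1 hi)).le (sq_nonneg _)
  -- find k < m with small value
  have hex : ∃ k < m, (u k)^2 ≤ S / δ := by
    by_contra hc
    push_neg at hc
    have hlt : (S/δ) * ∑ i ∈ range m, h i < S := by
      calc (S/δ) * ∑ i ∈ range m, h i = ∑ i ∈ range m, h i * (S/δ) := by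
            rw [mul_sum]; exact sum_congr rfl fun i _ => mul_comm _ _
        _ < ∑ i ∈ range m, h i * (u i)^2 := by
            apply sum_lt_sum_of_nonempty
            · exact nonempty_range_iff.2 (by omega)
            · intro i hi
              exact mul_lt_mul_of_pos_left (hc i (mem_range.1 hi)) (hh i (mem_range.1 hi))
    have : (S/δ) * δ ≤ (S/δ) * ∑ i ∈ range m, h i :=
      mul_le_mul_of_nonneg_left hδs (div_nonneg hS0 hδ.le)
    rw [div_mul_cancel₀ _ hδ.ne'] at this
    linarith
  obtain ⟨k, hk, hku⟩ := hex
  -- telescoping bound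
  set T := ∑ i ∈ range m, h i * |(u (i+1) - u i)/h i| with hT
  have hterm : ∀ i ∈ range m, |u (i+1) - u i| = h i * |(u (i+1) - u i)/h i| := by
    intro i hi
    have := hh i (mem_range.1 hi)
    rw [abs_div, abs_of_pos this, mul_div_cancel₀ _ this.ne']
  have habs : |u j - u k| ≤ T := by
    have key : ∀ p q : ℕ, p ≤ q → q ≤ m → |u q - u p| ≤ T := by
      intro p q hpq hqm
      have htel : u q - u p = ∑ i ∈ Finset.Ico p q, (u (i+1) - u i) := by
        rw [Finset.sum_Ico_eq_sub _ hpq, Finset.sum_range_sub, Finset.sum_range_sub]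
        ring
      rw [htel]
      calc |∑ i ∈ Finset.Ico p q, (u (i+1) - u i)|
          ≤ ∑ i ∈ Finset.Ico p q, |u (i+1) - u i| := Finset.abs_sum_le_sum_abs _ _
        _ ≤ ∑ i ∈ range m, |u (i+1) - u i| := by
            apply sum_le_sum_of_subset_of_nonneg
            · intro x hx
              rw [mem_range]
              exact lt_of_lt_of_le (Finset.mem_Ico.1 hx).2 hqm
            · intro i _ _; exact abs_nonneg _
        _ = T := sum_congr rfl hterm
    rcases le_total j k with hle | hle
    · rw [abs_sub_comm]; exact key j k hle (le_of_lt hk)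
    · exact key k j hle hj
  have hcauchy : T^2 ≤ (∑ i ∈ range m, h i) * Sx := by
    apply sum_sq_le_sum_mul_sum_of_sq_eq_mul
    · intro i hi; exact (hh i (mem_range.1 hi)).le
    · intro i hi; exact mul_nonneg (hh i (mem_range.1 hi)).le (sq_nonneg _)
    · intro i hi
      have := (hh i (mem_range.1 hi)).le
      rw [mul_pow, sq_abs]; ring
  have hT2 : T^2 ≤ l * Sx := by
    calc T^2 ≤ (∑ i ∈ range m, h i) * Sx := hcauchy
      _ ≤ l * Sx := mul_le_mul_of_nonneg_right hsl hSx0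
  have hT0 : 0 ≤ T := sum_nonneg fun i hi =>
    mul_nonneg (hh i (mem_range.1 hi)).le (abs_nonneg _)
  -- combine: |u j| ≤ |u k| + T
  have h1 : |u j| ≤ |u k| + T := by
    calc |u j| = |u k + (u j - u k)| := by ring_nf
      _ ≤ |u k| + |u j - u k| := abs_add_le _ _
      _ ≤ |u k| + T := by linarith
  have h2 : (u j)^2 ≤ 2*(u k)^2 + 2*T^2 := by
    have := sq_abs (u j); have := sq_abs (u k)
    nlinarith [abs_nonneg (u j), abs_nonneg (u k), sq_nonneg (|u k| - T)]
  have h3 : (u k)^2 ≤ S/δ := hku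
  have : (2/δ) * S = 2*(S/δ) := by ring
  linarith
lemma young_aux (x y ε : ℝ) (hε : 0 < ε) : -(2*(x*y)) ≤ ε*y^2 + (1/ε)*x^2 := by
  have h2 : 0 ≤ (ε*y+x)^2/ε := div_nonneg (sq_nonneg _) hε.le
  have h3 : (ε*y+x)^2/ε = ε*y^2 + 2*(x*y) + (1/ε)*x^2 := by field_simp; ring
  linarith [h3 ▸ h2]

lemma bbd_aux (a₀ M x y : ℝ) (ha₀ : 0 < a₀) (hM : 0 ≤ M) :
    M * (|x| * |y|) ≤ (a₀/4) * x^2 + (M^2/a₀) * y^2 := by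
  have key' : a₀ * (M * (|x| * |y|)) ≤ a₀ * ((a₀/4) * x^2 + (M^2/a₀) * y^2) := by
    have heq : a₀ * ((a₀/4) * x^2 + (M^2/a₀) * y^2) = (a₀^2/4) * x^2 + M^2 * y^2 := by
      field_simp
    rw [heq]
    nlinarith [sq_nonneg (a₀*|x| - 2*M*|y|), sq_abs x, sq_abs y]
  exact le_of_mul_le_mul_left key' ha₀

set_option maxHeartbeats 1000000 in
theorem stmt_13 (a₀ M δ l : ℝ) (ha₀ : 0 < a₀) (hM : a₀ ≤ M) (hδ : 0 < δ) (hδl : δ ≤ l) :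
    ∃ C₁ > (0:ℝ), ∀ τ : ℝ, 0 < τ → ∀ m : ℕ, 1 ≤ m →
      ∀ h a b c f : ℕ → ℝ, (∀ i < m, 0 < h i) →
      δ ≤ ∑ i ∈ Finset.range m, h i → (∑ i ∈ Finset.range m, h i) ≤ l →
      (∀ i < m, a i ∈ Set.Icc a₀ M) → (∀ i < m, |b i| ≤ M) → (∀ i < m, |c i| ≤ M) →
      ∀ P G : ℝ, ∀ w u : ℕ → ℝ,
      (∀ η : ℕ → ℝ,
        ∑ i ∈ Finset.range m,
          h i * (a i * ((u (i+1) - u i)/h i) * ((η (i+1) - η i)/h i)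
            - b i * ((u (i+1) - u i)/h i) * η i
            - c i * u i * η i
            + f i * η i
            + ((u i - w i)/τ) * η i)
        + P * η m + G * η 0 = 0) →
      ∑ i ∈ Finset.range m, h i * (u i)^2 - ∑ i ∈ Finset.range m, h i * (w i)^2
        + a₀ * τ * ∑ i ∈ Finset.range m, h i * ((u (i+1) - u i)/h i)^2
        + τ^2 * ∑ i ∈ Finset.range m, h i * ((u i - w i)/τ)^2
      ≤ C₁ * τ * (P^2 + G^2 + ∑ i ∈ Finset.range m, h i * (f i)^2
          + ∑ i ∈ Finset.range m, h i * (u i)^2) := by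
  have hM0 : 0 < M := lt_of_lt_of_le ha₀ hM
  have hl : 0 < l := lt_of_lt_of_le hδ hδl
  refine ⟨(M^2/a₀)*2 + 2*M + 1 + (a₀/(4*l*δ))*2 + 8*l/a₀, by positivity, ?_⟩
  intro τ hτ m hm h a b c f hh hδs hsl ha hb hc P G w u H
  set S := ∑ i ∈ range m, h i * (u i)^2 with hSdef
  set W := ∑ i ∈ range m, h i * (w i)^2 with hWdef
  set Sx := ∑ i ∈ range m, h i * ((u (i+1) - u i)/h i)^2 with hSxdef
  set D := ∑ i ∈ range m, h i * ((u i - w i)/τ)^2 with hDdef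
  set Sf := ∑ i ∈ range m, h i * (f i)^2 with hSfdef
  have hS0 : 0 ≤ S := sum_nonneg fun i hi => mul_nonneg (hh i (mem_range.1 hi)).le (sq_nonneg _)
  have hSx0 : 0 ≤ Sx := sum_nonneg fun i hi => mul_nonneg (hh i (mem_range.1 hi)).le (sq_nonneg _)
  have hSf0 : 0 ≤ Sf := sum_nonneg fun i hi => mul_nonneg (hh i (mem_range.1 hi)).le (sq_nonneg _)
  -- key identity from testing with η = 2τu
  have H2 := H (fun j => 2*τ*u j)
  set A := ∑ i ∈ range m, h i * (a i * ((u (i+1) - u i)/h i)^2) with hAdef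
  set B := ∑ i ∈ range m, h i * (b i * ((u (i+1) - u i)/h i) * u i) with hBdef
  set Cc := ∑ i ∈ range m, h i * (c i * (u i)^2) with hCdef
  set F := ∑ i ∈ range m, h i * (f i * u i) with hFdef
  have key : S - W + τ^2*D + 2*τ*A - 2*τ*B - 2*τ*Cc + 2*τ*F + P*(2*τ*u m) + G*(2*τ*u 0) = 0 := by
    rw [← H2]
    have hsplit : S - W + τ^2*D + 2*τ*A - 2*τ*B - 2*τ*Cc + 2*τ*F
        = ∑ i ∈ range m, (h i * (u i)^2 - h i * (w i)^2 + τ^2*(h i * ((u i - w i)/τ)^2)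
            + 2*τ*(h i * (a i * ((u (i+1) - u i)/h i)^2))
            - 2*τ*(h i * (b i * ((u (i+1) - u i)/h i) * u i))
            - 2*τ*(h i * (c i * (u i)^2)) + 2*τ*(h i * (f i * u i))) := by
      simp only [sum_add_distrib, sum_sub_distrib, ← mul_sum, hSdef, hWdef, hDdef, hAdef,
        hBdef, hCdef, hFdef]
    have hsum : ∑ i ∈ range m, (h i * (u i)^2 - h i * (w i)^2 + τ^2*(h i * ((u i - w i)/τ)^2)
            + 2*τ*(h i * (a i * ((u (i+1) - u i)/h i)^2))
            - 2*τ*(h i * (b i * ((u (i+1) - u i)/h i) * u i))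
            - 2*τ*(h i * (c i * (u i)^2)) + 2*τ*(h i * (f i * u i)))
        = ∑ i ∈ range m, h i * (a i * ((u (i+1) - u i)/h i) * ((2*τ*u (i+1) - 2*τ*u i)/h i)
            - b i * ((u (i+1) - u i)/h i) * (2*τ*u i)
            - c i * u i * (2*τ*u i)
            + f i * (2*τ*u i)
            + ((u i - w i)/τ) * (2*τ*u i)) := by
      apply sum_congr rfl
      intro i hi
      have hhi := (hh i (mem_range.1 hi)).ne'
      field_simp
      ring
    rw [hsplit, hsum]
  -- A ≥ a₀ Sx
  have hA : a₀ * Sx ≤ A := by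
    rw [hAdef, hSxdef, mul_sum]
    apply sum_le_sum
    intro i hi
    have h1 := hh i (mem_range.1 hi)
    have h2 := (ha i (mem_range.1 hi)).1
    calc a₀ * (h i * ((u (i+1) - u i)/h i)^2) = h i * (a₀ * ((u (i+1) - u i)/h i)^2) := by ring
      _ ≤ h i * (a i * ((u (i+1) - u i)/h i)^2) := by
          apply mul_le_mul_of_nonneg_left _ h1.le
          exact mul_le_mul_of_nonneg_right h2 (sq_nonneg _)
  -- B bound
  have hB2 : B ≤ (a₀/4) * Sx + (M^2/a₀) * S := by
    rw [hBdef, hSxdef, hSdef, mul_sum, mul_sum, ← sum_add_distrib]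
    apply sum_le_sum
    intro i hi
    have h1 := hh i (mem_range.1 hi)
    have h2 := hb i (mem_range.1 hi)
    set x := (u (i+1) - u i)/h i
    have hbx : b i * x * u i ≤ M * (|x| * |u i|) := by
      calc b i * x * u i ≤ |b i * x * u i| := le_abs_self _
        _ = |b i| * (|x| * |u i|) := by rw [abs_mul, abs_mul]; ring
        _ ≤ M * (|x| * |u i|) :=
            mul_le_mul_of_nonneg_right h2 (mul_nonneg (abs_nonneg _) (abs_nonneg _))
    have hsq : M * (|x| * |u i|) ≤ (a₀/4) * x^2 + (M^2/a₀) * (u i)^2 :=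
      bbd_aux a₀ M x (u i) ha₀ hM0.le
    calc h i * (b i * x * u i) ≤ h i * ((a₀/4) * x^2 + (M^2/a₀) * (u i)^2) :=
          mul_le_mul_of_nonneg_left (le_trans hbx hsq) h1.le
      _ = a₀/4 * (h i * x^2) + M^2/a₀ * (h i * (u i)^2) := by ring
  -- C bound
  have hC2 : Cc ≤ M * S := by
    rw [hCdef, hSdef, mul_sum]
    apply sum_le_sum
    intro i hi
    have h1 := hh i (mem_range.1 hi)
    have h2 := hc i (mem_range.1 hi)
    have : c i * (u i)^2 ≤ M * (u i)^2 :=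
      mul_le_mul_of_nonneg_right (le_trans (le_abs_self _) h2) (sq_nonneg _)
    calc h i * (c i * (u i)^2) ≤ h i * (M * (u i)^2) := mul_le_mul_of_nonneg_left this h1.le
      _ = M * (h i * (u i)^2) := by ring
  -- F bound
  have hF2 : -F ≤ (1/2) * Sf + (1/2) * S := by
    rw [hFdef, hSfdef, hSdef, ← sum_neg_distrib, mul_sum, mul_sum, ← sum_add_distrib]
    apply sum_le_sum
    intro i hi
    have h1 := hh i (mem_range.1 hi)
    nlinarith [sq_nonneg (f i + u i), h1.le, sq_nonneg (f i), sq_nonneg (u i)]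
  -- Morrey bounds
  have hmor_m : (u m)^2 ≤ (2/δ) * S + 2*l*Sx :=
    morrey_aux δ l hδ m hm h u hh hδs hsl m le_rfl
  have hmor_0 : (u 0)^2 ≤ (2/δ) * S + 2*l*Sx :=
    morrey_aux δ l hδ m hm h u hh hδs hsl 0 (Nat.zero_le m)
  -- boundary bounds
  have hε : (0:ℝ) < a₀/(8*l) := by positivity
  have hinv : 1/(a₀/(8*l)) = 8*l/a₀ := one_div_div _ _
  have hP : -(2*(P*u m)) ≤ (a₀/(8*l)) * (u m)^2 + (8*l/a₀) * P^2 := by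
    have := young_aux P (u m) _ hε
    rwa [hinv] at this
  have hG : -(2*(G*u 0)) ≤ (a₀/(8*l)) * (u 0)^2 + (8*l/a₀) * G^2 := by
    have := young_aux G (u 0) _ hε
    rwa [hinv] at this
  have hum : (a₀/(8*l)) * (u m)^2 ≤ (a₀/(4*l*δ)) * S + (a₀/4) * Sx := by
    calc (a₀/(8*l)) * (u m)^2 ≤ (a₀/(8*l)) * ((2/δ) * S + 2*l*Sx) :=
          mul_le_mul_of_nonneg_left hmor_m hε.le
      _ = (a₀/(4*l*δ)) * S + (a₀/4) * Sx := by field_simp; ring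
  have hu0 : (a₀/(8*l)) * (u 0)^2 ≤ (a₀/(4*l*δ)) * S + (a₀/4) * Sx := by
    calc (a₀/(8*l)) * (u 0)^2 ≤ (a₀/(8*l)) * ((2/δ) * S + 2*l*Sx) :=
          mul_le_mul_of_nonneg_left hmor_0 hε.le
      _ = (a₀/(4*l*δ)) * S + (a₀/4) * Sx := by field_simp; ring
  -- multiply scalar inequalities by τ > 0
  have t1 : τ * B ≤ τ * ((a₀/4) * Sx + (M^2/a₀) * S) := mul_le_mul_of_nonneg_left hB2 hτ.le
  have t2 : τ * Cc ≤ τ * (M * S) := mul_le_mul_of_nonneg_left hC2 hτ.le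
  have t3 : τ * (-F) ≤ τ * ((1/2) * Sf + (1/2) * S) := mul_le_mul_of_nonneg_left hF2 hτ.le
  have t4 : τ * (-(2*(P*u m))) ≤ τ * ((a₀/(4*l*δ)) * S + (a₀/4) * Sx + (8*l/a₀) * P^2) :=
    mul_le_mul_of_nonneg_left (by linarith) hτ.le
  have t5 : τ * (-(2*(G*u 0))) ≤ τ * ((a₀/(4*l*δ)) * S + (a₀/4) * Sx + (8*l/a₀) * G^2) :=
    mul_le_mul_of_nonneg_left (by linarith) hτ.le
  have t6 : τ * (a₀ * Sx) ≤ τ * A := mul_le_mul_of_nonneg_left hA hτ.le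
  -- slack terms for the final comparison
  have hc1 : (0:ℝ) ≤ (M^2/a₀)*2 + 2*M + 1 + (a₀/(4*l*δ))*2 := by positivity
  have hc2 : (0:ℝ) ≤ (M^2/a₀)*2 + 2*M + (a₀/(4*l*δ))*2 + 8*l/a₀ := by positivity
  have hc3 : (0:ℝ) ≤ 8*l/a₀ := by positivity
  have sP : 0 ≤ ((M^2/a₀)*2 + 2*M + 1 + (a₀/(4*l*δ))*2) * (τ * P^2) :=
    mul_nonneg hc1 (mul_nonneg hτ.le (sq_nonneg _))
  have sG : 0 ≤ ((M^2/a₀)*2 + 2*M + 1 + (a₀/(4*l*δ))*2) * (τ * G^2) :=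
    mul_nonneg hc1 (mul_nonneg hτ.le (sq_nonneg _))
  have sSf : 0 ≤ ((M^2/a₀)*2 + 2*M + (a₀/(4*l*δ))*2 + 8*l/a₀) * (τ * Sf) :=
    mul_nonneg hc2 (mul_nonneg hτ.le hSf0)
  have sS : 0 ≤ (8*l/a₀) * (τ * S) := mul_nonneg hc3 (mul_nonneg hτ.le hS0)
  linarith [t1, t2, t3, t4, t5, t6, key, sP, sG, sSf, sS]
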